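/- Let e be a natural number with e ≥ 3. There is no additive subgroup H of (ℤ/eℤ) × (ℤ/2ℤ) × (ℤ/2ℤ) such that the projection onto the first factor maps H onto ℤ/eℤ and, for every x = (x₁,x₂,x₃) ∈ H, the rational number val x₁ / e + val x₂ / 2 + val x₃ / 2 is an integer. -/

import Mathlib

theorem case_two_impossible (e : ℕ) (he : 3 ≤ e) :
    ¬ ∃ H : AddSubgroup (ZMod e × ZMod 2 × ZMod 2),
        (∀ a : ZMod e, ∃ x ∈ H, x.1 = a) ∧
        (∀ x ∈ H, ∃ z : ℤ,
          ((x.1.val : ℚ) / e + (x.2.1.val : ℚ) / 2 + (x.2.2.val : ℚ) / 2 = (z : ℚ))) := by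
  rintro ⟨H, hsurj, hint⟩
  haveI : Fact (1 < e) := ⟨by omega⟩
  obtain ⟨x, hxH, hx1⟩ := hsurj 1
  obtain ⟨z, hz⟩ := hint x hxH
  have h1 : x.1.val = 1 := by rw [hx1, ZMod.val_one]
  have hv2 : x.2.1.val < 2 := x.2.1.val_lt
  have hv3 : x.2.2.val < 2 := x.2.2.val_lt
  have he0 : (e : ℚ) ≠ 0 := by positivity
  rw [h1] at hz
  set n2 : ℕ := x.2.1.val with hn2
  set n3 : ℕ := x.2.2.val with hn3
  have key : (2 : ℚ) + e * n2 + e * n3 = 2 * e * z := by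
    field_simp at hz
    push_cast at hz
    linarith
  have keyz : (2 : ℤ) + e * n2 + e * n3 = 2 * e * z := by
    exact_mod_cast key
  have hdvd : (e : ℤ) ∣ 2 := ⟨2 * z - n2 - n3, by linarith⟩
  have := Int.le_of_dvd (by norm_num) hdvd
  omega
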